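/- Let A be a unital C*-algebra and X ⊆ A a closed linear subspace that is closed under the adjoint operation. Then there exists v ∈ X with 1 ≤ v if and only if the distance from 1 to X is strictly less than 1, i.e., inf{‖x − 1‖ : x ∈ X} < 1. -/

import Mathlib

/-- Let `X` be a closed selfadjoint subspace of a unital C*-algebra `A`.
Then some `v ∈ X` dominates `1` if and only if the distance from `1` to `X` is strictly
less than `1`. -/
theorem exists_dominating_of_infDist_lt_one
    {A : Type*} [CStarAlgebra A] [PartialOrder A] [StarOrderedRing A]
    (X : Submodule ℂ A) (hXclosed : IsClosed (X : Set A))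
    (hXstar : ∀ x ∈ X, star x ∈ X) :
    (∃ v ∈ X, (1 : A) ≤ v) ↔ Metric.infDist (1 : A) (X : Set A) < 1 := by
  rcases subsingleton_or_nontrivial A with hA | hA
  · constructor
    · intro _
      calc Metric.infDist (1 : A) (X : Set A) ≤ dist (1 : A) 0 :=
            Metric.infDist_le_dist_of_mem (by exact_mod_cast X.zero_mem)
        _ = 0 := by simp [Subsingleton.elim (1 : A) 0]
        _ < 1 := one_pos
    · intro _
      exact ⟨0, X.zero_mem, le_of_eq (Subsingleton.elim _ _)⟩
  constructor
  · rintro ⟨v, hvX, hv⟩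
    have hv0 : (0 : A) ≤ v := zero_le_one.trans hv
    have hvsa : IsSelfAdjoint v := .of_nonneg hv0
    set M : ℝ := ‖v‖ with hM
    have hM1 : 1 ≤ M := by
      have := CStarAlgebra.norm_le_norm_of_nonneg_of_le zero_le_one hv
      simpa using this
    have hMpos : (0:ℝ) < 1 + M := by linarith
    set t : ℝ := 2 / (1 + M) with ht
    have ht0 : 0 ≤ t := by positivity
    set r : ℝ := (M - 1) / (M + 1) with hr
    have hr1 : r < 1 := by
      rw [hr, div_lt_one (by linarith)]; linarith
    -- the element t • v
    have hxX : ((t : ℂ) • v) ∈ X := X.smul_mem _ hvX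
    have htv : (t : ℂ) • v = t • v := by
      rw [Complex.coe_smul]
    -- order bounds on b := t • v - 1
    have hub : t • v - 1 ≤ algebraMap ℝ A r := by
      have h1 : v ≤ algebraMap ℝ A M := hvsa.le_algebraMap_norm_self
      have h2 : t • v ≤ t • (algebraMap ℝ A M) := smul_le_smul_of_nonneg_left h1 ht0
      have h3 : t • (algebraMap ℝ A M) = algebraMap ℝ A (t * M) := by
        rw [Algebra.smul_def, ← map_mul]
      have h4 : t * M - 1 = r := by
        rw [ht, hr]; field_simp; ring
      rw [sub_le_iff_le_add]
      calc t • v ≤ algebraMap ℝ A (t * M) := h3 ▸ h2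
        _ = algebraMap ℝ A r + 1 := by
            rw [← h4, map_sub, map_one]; abel
    have hlb : algebraMap ℝ A (-r) ≤ t • v - 1 := by
      have h1 : t • (1 : A) ≤ t • v := smul_le_smul_of_nonneg_left hv ht0
      have h2 : t • (1 : A) = algebraMap ℝ A t := by
        rw [Algebra.smul_def, mul_one]
      have h4 : t - 1 = -r := by
        rw [ht, hr]; field_simp; ring
      rw [le_sub_iff_add_le, ← h4, map_sub, map_one, sub_add_cancel, ← h2]
      exact h1
    -- selfadjointness of b
    have hbsa : IsSelfAdjoint (t • v - 1) := by
      exact (IsSelfAdjoint.smul (star_trivial t) hvsa).sub (IsSelfAdjoint.one (R:=A))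
    -- spectrum bounds
    have hspec : ∀ s ∈ spectrum ℝ (t • v - 1), -r ≤ s ∧ s ≤ r := by
      have h1 := (le_algebraMap_iff_spectrum_le (r := r) (a := t • v - 1) hbsa).mp hub
      have h2 := (algebraMap_le_iff_le_spectrum (r := -r) (a := t • v - 1) hbsa).mp hlb
      exact fun s hs => ⟨h2 s hs, h1 s hs⟩
    have hnorm : ‖t • v - 1‖ ≤ r := by
      rcases CStarAlgebra.norm_or_neg_norm_mem_spectrum hbsa with h | h
      · exact (hspec _ h).2
      · have := (hspec _ h).1; linarith
    calc Metric.infDist (1 : A) (X : Set A) ≤ dist (1 : A) ((t : ℂ) • v) :=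
          Metric.infDist_le_dist_of_mem hxX
      _ = ‖t • v - 1‖ := by rw [dist_eq_norm, htv, ← norm_neg]; congr 1; abel
      _ ≤ r := hnorm
      _ < 1 := hr1
  · intro hlt
    obtain ⟨x, hxX, hx⟩ := (Metric.infDist_lt_iff ⟨0, by exact_mod_cast X.zero_mem⟩).mp hlt
    have hx' : ‖1 - x‖ < 1 := by rwa [dist_eq_norm] at hx
    set h : A := (2 : ℂ)⁻¹ • (x + star x) with hh
    have hhX : h ∈ X := X.smul_mem _ (X.add_mem hxX (hXstar x hxX))
    have hhsa : IsSelfAdjoint h := by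
      rw [hh]
      simp [IsSelfAdjoint, star_smul, star_add, add_comm]
    have hkey : ‖1 - h‖ < 1 := by
      have : 1 - h = (2 : ℂ)⁻¹ • ((1 - x) + (1 - star x)) := by
        rw [hh]; module
      rw [this]
      have h2 : ‖(1 : A) - star x‖ = ‖(1 : A) - x‖ := by
        rw [← norm_star]; simp
      calc ‖(2 : ℂ)⁻¹ • ((1 - x) + (1 - star x))‖
          ≤ ‖(2:ℂ)⁻¹‖ * (‖(1:A) - x‖ + ‖(1:A) - star x‖) := by
            rw [norm_smul]
            gcongr
            exact norm_add_le _ _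
        _ = ‖(1:A) - x‖ := by rw [h2]; simp; ring
        _ < 1 := hx'
    set r : ℝ := ‖1 - h‖ with hrdef
    have hr0 : 0 < 1 - r := by linarith
    have hle : 1 - h ≤ algebraMap ℝ A r :=
      IsSelfAdjoint.le_algebraMap_norm_self ((IsSelfAdjoint.one (R:=A)).sub hhsa)
    have hge : algebraMap ℝ A (1 - r) ≤ h := by
      rw [map_sub, map_one, sub_le_iff_le_add]
      have h1 : (1 - h) + h ≤ algebraMap ℝ A r + h := add_le_add_left hle h
      rw [add_comm h]
      simpa using h1
    refine ⟨((1 - r)⁻¹ : ℝ) • h, ?_, ?_⟩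
    · have : ((1 - r)⁻¹ : ℝ) • h = (((1 - r)⁻¹ : ℝ) : ℂ) • h := (Complex.coe_smul _ _).symm
      rw [this]; exact X.smul_mem _ hhX
    · have h1 : (1 - r)⁻¹ • (algebraMap ℝ A (1 - r)) ≤ (1 - r)⁻¹ • h :=
        smul_le_smul_of_nonneg_left hge (by positivity)
      have h2 : (1 - r)⁻¹ • (algebraMap ℝ A (1 - r)) = (1 : A) := by
        rw [Algebra.smul_def, ← map_mul, inv_mul_cancel₀ hr0.ne', map_one]
      rwa [h2] at h1
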